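/- If ⋃_{k=1}^n (φ̆_k¹ ∩ φ̆_k²) ⊆ ⋃_{l=1}^m (ψ̆_l¹ ∩ ψ̆_l²) with all φ_k^j, ψ_l^j in a totally ordered set Θ, then for every k there exists l with min{φ_k¹,φ_k²} ≤ min{ψ_l¹,ψ_l²} and max{φ_k¹,φ_k²} ≥ max{ψ_l¹,ψ_l²}, and hence φ̆_k¹ ∩ φ̆_k² ⊆ ψ̆_l¹ ∩ ψ̆_l². -/
import Mathlib


/-- For `φ ∈ Θ`, the set `φ̆ = {(x,y) ∈ Θ² : x ≤ φ ≤ y}`. -/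
def breve {Θ : Type} [LinearOrder Θ] (φ : Θ) : Set (Θ × Θ) :=
  {p | p.1 ≤ φ ∧ φ ≤ p.2}

/-- If `⋃_{k} (φ̆_k¹ ∩ φ̆_k²) ⊆ ⋃_{l} (ψ̆_l¹ ∩ ψ̆_l²)` over a totally ordered `Θ`,
then for every `k` there exists `l` with `min{φ_k¹,φ_k²} ≤ min{ψ_l¹,ψ_l²}` and
`max{φ_k¹,φ_k²} ≥ max{ψ_l¹,ψ_l²}`, and hence `φ̆_k¹ ∩ φ̆_k² ⊆ ψ̆_l¹ ∩ ψ̆_l²`. -/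
theorem breve_union_subset {Θ : Type} [LinearOrder Θ] {n m : ℕ}
    (hn : 1 ≤ n) (hm : 1 ≤ m)
    (φ₁ φ₂ : Fin n → Θ) (ψ₁ ψ₂ : Fin m → Θ)
    (hsub : (⋃ k : Fin n, breve (φ₁ k) ∩ breve (φ₂ k)) ⊆
      ⋃ l : Fin m, breve (ψ₁ l) ∩ breve (ψ₂ l)) :
    ∀ k : Fin n, ∃ l : Fin m,
      min (φ₁ k) (φ₂ k) ≤ min (ψ₁ l) (ψ₂ l) ∧
      max (ψ₁ l) (ψ₂ l) ≤ max (φ₁ k) (φ₂ k) ∧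
      breve (φ₁ k) ∩ breve (φ₂ k) ⊆ breve (ψ₁ l) ∩ breve (ψ₂ l) := by
  intro k
  have hmem : (min (φ₁ k) (φ₂ k), max (φ₁ k) (φ₂ k)) ∈
      ⋃ k : Fin n, breve (φ₁ k) ∩ breve (φ₂ k) := by
    refine Set.mem_iUnion.2 ⟨k, ?_⟩
    exact ⟨⟨min_le_left _ _, le_max_left _ _⟩, ⟨min_le_right _ _, le_max_right _ _⟩⟩
  obtain ⟨l, h1, h2⟩ := Set.mem_iUnion.1 (hsub hmem)
  refine ⟨l, le_min h1.1 h2.1, max_le h1.2 h2.2, ?_⟩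
  rintro ⟨x, y⟩ ⟨⟨hx1, hy1⟩, ⟨hx2, hy2⟩⟩
  have hx : x ≤ min (φ₁ k) (φ₂ k) := le_min hx1 hx2
  have hy : max (φ₁ k) (φ₂ k) ≤ y := max_le hy1 hy2
  exact ⟨⟨hx.trans ((le_min h1.1 h2.1).trans (min_le_left _ _)),
      ((le_max_left _ _).trans (max_le h1.2 h2.2)).trans hy⟩,
    ⟨hx.trans ((le_min h1.1 h2.1).trans (min_le_right _ _)),
      ((le_max_right _ _).trans (max_le h1.2 h2.2)).trans hy⟩⟩
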